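/- Fix the linear order 1 < 2 < ⋯ < 2n on the ground set of the Catalan matroid C_n. For any basis B of C_n, the external activity e(B) (the number of elements e ∉ B such that e is the smallest element of the unique circuit contained in B ∪ {e}) equals b(B), the number of x ∈ {1,…,2n} with ht_B(x) = 0. -/
import Mathlib


/-- Height of the path with up-step set `A` after `x` steps: `2·|A ∩ {1,…,x}| − x`. -/
def ht (A : Finset ℕ) (x : ℕ) : ℤ := 2 * (A ∩ Finset.Icc 1 x).card - x

/-- `P` is the up-step set of a Dyck path of length `2n`. -/
def IsDyck (n : ℕ) (P : Finset ℕ) : Prop :=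
  P ⊆ Finset.Icc 1 (2 * n) ∧ P.card = n ∧ ∀ x ≤ 2 * n, 0 ≤ ht P x

/-- `A` is independent in the Catalan matroid: it is contained in some basis. -/
def CatalanIndep (n : ℕ) (A : Finset ℕ) : Prop :=
  ∃ B : Finset ℕ, IsDyck n B ∧ A ⊆ B

/-- A circuit of the Catalan matroid: a minimal dependent subset of the ground set. -/
def IsCatalanCircuit (n : ℕ) (A : Finset ℕ) : Prop :=
  A ⊆ Finset.Icc 1 (2 * n) ∧ ¬ CatalanIndep n A ∧ ∀ A' ⊂ A, CatalanIndep n A'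

/-- `e` is externally active with respect to the basis `B` (for the order
`1 < 2 < ⋯ < 2n`): `e` is in the ground set but not in `B`, and `e` is the smallest
element of the unique circuit contained in `B ∪ {e}`. -/
def ExternallyActive (n : ℕ) (B : Finset ℕ) (e : ℕ) : Prop :=
  e ∈ Finset.Icc 1 (2 * n) ∧ e ∉ B ∧ ∃ C : Finset ℕ, IsCatalanCircuit n C ∧
    C ⊆ insert e B ∧ e ∈ C ∧ ∀ c ∈ C, e ≤ c

open Finset

lemma count_split {n : ℕ} {A : Finset ℕ} (hA : A ⊆ Finset.Icc 1 (2*n)) (x : ℕ) :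
    (A ∩ Finset.Icc 1 x).card + (A.filter (fun a => x < a)).card = A.card := by
  classical
  have h1 : A ∩ Finset.Icc 1 x = A.filter (fun a => ¬ x < a) := by
    ext a
    simp only [mem_inter, mem_Icc, mem_filter, not_lt]
    constructor
    · rintro ⟨ha, _, h2⟩; exact ⟨ha, h2⟩
    · rintro ⟨ha, h2⟩
      have := hA ha; simp only [mem_Icc] at this
      exact ⟨ha, this.1, h2⟩
  rw [h1, add_comm]
  exact card_filter_add_card_filter_not _

lemma dyck_count {n : ℕ} {B : Finset ℕ} (hB : IsDyck n B) {x : ℕ} (hx : x ≤ 2*n) :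
    x ≤ 2 * (B ∩ Finset.Icc 1 x).card := by
  have h := hB.2.2 x hx
  unfold ht at h
  have : (x:ℤ) ≤ 2 * (B ∩ Finset.Icc 1 x).card := by linarith
  exact_mod_cast this

lemma bounds_of_indep {n : ℕ} {A : Finset ℕ} (h : CatalanIndep n A) :
    ∀ x ≤ 2*n, 2 * (A.filter (fun a => x < a)).card ≤ 2*n - x := by
  obtain ⟨B, hB, hAB⟩ := h
  intro x hx
  have h1 : (A.filter (fun a => x < a)).card ≤ (B.filter (fun a => x < a)).card :=
    card_le_card (filter_subset_filter _ hAB)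
  have h2 := count_split hB.1 x
  rw [hB.2.1] at h2
  have h3 := dyck_count hB hx
  omega

lemma discrete_ivt (g : ℕ → ℕ) (h0 : g 0 = 0) (hstep : ∀ k, g (k+1) ≤ g k + 1)
    {m N : ℕ} (hm : m ≤ g N) : ∃ t ≤ N, g t = m := by
  induction N with
  | zero => exact ⟨0, le_rfl, by omega⟩
  | succ N ih =>
    by_cases h : m ≤ g N
    · obtain ⟨t, ht, h2⟩ := ih h
      exact ⟨t, ht.trans (Nat.le_succ N), h2⟩
    · have := hstep N
      exact ⟨N+1, le_rfl, by omega⟩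

lemma indep_of_bounds (n : ℕ) (A : Finset ℕ) (hA : A ⊆ Finset.Icc 1 (2*n))
    (h : ∀ x ≤ 2*n, 2 * (A.filter (fun a => x < a)).card ≤ 2*n - x) :
    CatalanIndep n A := by
  classical
  have hAfull : A.filter (fun a => 0 < a) = A :=
    filter_true_of_mem (fun a ha => by have := hA ha; simp only [mem_Icc] at this; omega)
  have hAcard : A.card ≤ n := by
    have := h 0 (by omega)
    rw [hAfull] at this; omega
  set m := n - A.card with hm
  set g : ℕ → ℕ := fun y => ((Finset.Icc 1 y).filter (fun z => z ∉ A)).card with hg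
  have h0 : g 0 = 0 := by simp [g]
  have hstep : ∀ k, g (k+1) ≤ g k + 1 := by
    intro k
    have hins : Finset.Icc 1 (k+1) = insert (k+1) (Finset.Icc 1 k) := by
      ext y; simp only [mem_Icc, mem_insert]; omega
    simp only [g, hins, filter_insert]
    split
    · exact card_insert_le _ _
    · omega
  have hgN : m ≤ g (2*n) := by
    have hsd : (Finset.Icc 1 (2*n)).filter (fun z => z ∉ A) = Finset.Icc 1 (2*n) \ A := by
      ext z; simp only [mem_filter, mem_sdiff]
    simp only [g, hsd]
    rw [card_sdiff_of_subset hA, Nat.card_Icc]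
    omega
  obtain ⟨t, htN, hgt⟩ := discrete_ivt g h0 hstep hgN
  set T := (Finset.Icc 1 t).filter (fun z => z ∉ A) with hT
  have hgt' : T.card = m := hgt
  have hTdisj : Disjoint A T := by
    rw [disjoint_right]
    intro z hz
    exact (mem_filter.mp hz).2
  refine ⟨A ∪ T, ⟨?_, ?_, ?_⟩, subset_union_left⟩
  · apply union_subset hA
    intro z hz
    have h1 := (mem_filter.mp hz).1
    simp only [mem_Icc] at h1 ⊢
    omega
  · rw [card_union_of_disjoint hTdisj, hgt']
    omega
  · intro x hx
    unfold ht
    have hs : x ≤ 2 * ((A ∪ T) ∩ Finset.Icc 1 x).card := by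
      by_cases hxt : x ≤ t
      · have hsub : Finset.Icc 1 x ⊆ (A ∪ T) ∩ Finset.Icc 1 x := by
          intro y hy
          simp only [mem_Icc] at hy
          rw [mem_inter, mem_union]
          refine ⟨?_, by simp [mem_Icc]; omega⟩
          by_cases hyA : y ∈ A
          · exact Or.inl hyA
          · exact Or.inr (mem_filter.mpr ⟨by simp [mem_Icc]; omega, hyA⟩)
        have := card_le_card hsub
        rw [Nat.card_Icc] at this
        omega
      · have hTx : T ⊆ Finset.Icc 1 x := by
          intro z hz
          have := (mem_filter.mp hz).1
          simp only [mem_Icc] at this ⊢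
          omega
        have hsub : T ∪ (A ∩ Finset.Icc 1 x) ⊆ (A ∪ T) ∩ Finset.Icc 1 x := by
          intro z hz
          rw [mem_inter, mem_union]
          rcases mem_union.mp hz with h1 | h1
          · exact ⟨Or.inr h1, hTx h1⟩
          · exact ⟨Or.inl (mem_inter.mp h1).1, (mem_inter.mp h1).2⟩
        have hdisj2 : Disjoint T (A ∩ Finset.Icc 1 x) := by
          rw [disjoint_left]
          intro z hz hz2
          exact (mem_filter.mp hz).2 (mem_inter.mp hz2).1
        have hc1 := card_le_card hsub
        rw [card_union_of_disjoint hdisj2, hgt'] at hc1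
        have hc2 := count_split hA x
        have hc3 := h x hx
        omega
    omega
lemma mem_B_height {n : ℕ} {B : Finset ℕ} (hB : IsDyck n B) {e : ℕ}
    (he1 : 1 ≤ e) (he2 : e ≤ 2*n) (heB : e ∈ B) :
    e < 2 * (B ∩ Finset.Icc 1 e).card := by
  have h0 : e - 1 ≤ 2*n := by omega
  have h2 := dyck_count hB h0
  have h3 : B ∩ Finset.Icc 1 e = insert e (B ∩ Finset.Icc 1 (e-1)) := by
    ext b
    simp only [mem_inter, mem_Icc, mem_insert]
    constructor
    · rintro ⟨hb, hb1, hb2⟩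
      rcases Nat.eq_or_lt_of_le hb2 with h | h
      · exact Or.inl h
      · exact Or.inr ⟨hb, hb1, by omega⟩
    · rintro (h | ⟨hb, hb1, hb2⟩)
      · subst h; exact ⟨heB, he1, le_rfl⟩
      · exact ⟨hb, hb1, by omega⟩
  have h4 : e ∉ B ∩ Finset.Icc 1 (e-1) := by
    rw [mem_inter, mem_Icc]
    rintro ⟨-, -, h⟩
    omega
  rw [h3, card_insert_of_notMem h4]
  omega

lemma ea_of_ht {n : ℕ} {B : Finset ℕ} (hB : IsDyck n B) {e : ℕ}
    (he1 : 1 ≤ e) (he2 : e ≤ 2*n) (hht : 2 * (B ∩ Finset.Icc 1 e).card = e) :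
    ExternallyActive n B e := by
  classical
  have heB : e ∉ B := fun h => by have := mem_B_height hB he1 he2 h; omega
  have hsplit := count_split hB.1 e
  rw [hB.2.1] at hsplit
  set cB := (B ∩ Finset.Icc 1 e).card with hcB
  set F := B.filter (fun b => e < b) with hF
  set C := insert e F with hC
  have heF : e ∉ F := fun h => heB (mem_filter.mp h).1
  have hCcard : C.card = F.card + 1 := card_insert_of_notMem heF
  have hCmem : ∀ c ∈ C, e ≤ c := by
    intro c hc
    rcases mem_insert.mp hc with h | h
    · omega
    · exact le_of_lt (mem_filter.mp h).2
  have hCsub : C ⊆ Finset.Icc 1 (2*n) := by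
    intro c hc
    rcases mem_insert.mp hc with h | h
    · subst h; rw [mem_Icc]; omega
    · exact hB.1 (mem_filter.mp h).1
  have hCB : C ⊆ insert e B := by
    intro c hc
    rcases mem_insert.mp hc with h | h
    · subst h; exact mem_insert_self _ _
    · exact mem_insert_of_mem (mem_filter.mp h).1
  refine ⟨by rw [mem_Icc]; omega, heB, C, ⟨hCsub, ?_, ?_⟩, hCB, mem_insert_self _ _, hCmem⟩
  · intro hind
    have hbd := bounds_of_indep hind (e-1) (by omega)
    have hfe : C.filter (fun a => e - 1 < a) = C :=
      filter_true_of_mem (fun c hc => by have := hCmem c hc; omega)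
    rw [hfe] at hbd
    omega
  · intro A hA
    have hAsub : A ⊆ Finset.Icc 1 (2*n) := hA.subset.trans hCsub
    apply indep_of_bounds n A hAsub
    intro x hx
    by_cases hxe : x < e
    · have hAx : A.filter (fun a => x < a) = A :=
        filter_true_of_mem (fun a ha => lt_of_lt_of_le hxe (hCmem a (hA.subset ha)))
      rw [hAx]
      have hAcard : A.card < C.card := card_lt_card hA
      omega
    · have hsub : A.filter (fun a => x < a) ⊆ B.filter (fun b => x < b) := by
        intro a ha
        rcases mem_filter.mp ha with ⟨haA, hax⟩
        rcases mem_insert.mp (hA.subset haA) with h | h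
        · omega
        · exact mem_filter.mpr ⟨(mem_filter.mp h).1, hax⟩
      have h1 := card_le_card hsub
      have h2 := count_split hB.1 x
      rw [hB.2.1] at h2
      have h3 := dyck_count hB hx
      omega

lemma ht_of_ea {n : ℕ} {B : Finset ℕ} (hB : IsDyck n B) {e : ℕ}
    (hea : ExternallyActive n B e) : 2 * (B ∩ Finset.Icc 1 e).card = e := by
  classical
  obtain ⟨he, heB, C, hCcirc, hCsub, heC, hmin⟩ := hea
  rw [mem_Icc] at he
  by_contra hne
  have hge := dyck_count hB he.2
  apply hCcirc.2.1
  apply indep_of_bounds n C hCcirc.1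
  intro x hx
  by_cases hxe : x < e
  · have hCx : C.filter (fun a => x < a) = C :=
      filter_true_of_mem (fun c hc => lt_of_lt_of_le hxe (hmin c hc))
    rw [hCx]
    have hsub : C ⊆ insert e (B.filter (fun b => e < b)) := by
      intro c hc
      rcases mem_insert.mp (hCsub hc) with h | h
      · subst h; exact mem_insert_self _ _
      · refine mem_insert_of_mem (mem_filter.mpr ⟨h, ?_⟩)
        have h1 := hmin c hc
        have h2 : c ≠ e := fun h' => heB (h' ▸ h)
        omega
    have h1 : C.card ≤ (B.filter (fun b => e < b)).card + 1 :=
      le_trans (card_le_card hsub) (card_insert_le _ _)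
    have h2 := count_split hB.1 e
    rw [hB.2.1] at h2
    omega
  · have hsub : C.filter (fun a => x < a) ⊆ B.filter (fun b => x < b) := by
      intro a ha
      rcases mem_filter.mp ha with ⟨haA, hax⟩
      rcases mem_insert.mp (hCsub haA) with h | h
      · omega
      · exact mem_filter.mpr ⟨h, hax⟩
    have h1 := card_le_card hsub
    have h2 := count_split hB.1 x
    rw [hB.2.1] at h2
    have h3 := dyck_count hB hx
    omega

/-- For any basis `B` of the Catalan matroid, the external activity of `B` equals the
number of `x ∈ {1,…,2n}` with `ht_B(x) = 0`. -/
theorem catalan_external_activity (n : ℕ) (hn : 0 < n) (B : Finset ℕ) (hB : IsDyck n B) :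
    {e : ℕ | ExternallyActive n B e}.ncard =
      ((Finset.Icc 1 (2 * n)).filter (fun x => ht B x = 0)).card := by
  have key : {e : ℕ | ExternallyActive n B e} =
      ↑((Finset.Icc 1 (2 * n)).filter (fun x => ht B x = 0)) := by
    ext e
    simp only [Set.mem_setOf_eq, Finset.coe_filter, Set.mem_setOf_eq, mem_Icc]
    constructor
    · intro h
      have h1 := h.1
      rw [mem_Icc] at h1
      have h2 := ht_of_ea hB h
      refine ⟨h1, ?_⟩
      unfold ht
      omega
    · rintro ⟨h1, h2⟩
      unfold ht at h2
      exact ea_of_ht hB h1.1 h1.2 (by omega)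
  rw [key, Set.ncard_coe_finset]
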